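/- Let N ≥ 1, p ≥ 1 be integers, let λ = (λ_1 ≥ ⋯ ≥ λ_N) be a signature with p ≥ λ_1, λ_N ≥ 0, and let μ = (μ_1 ≥ ⋯ ≥ μ_{N+1}) be a signature with p ≥ μ_1, μ_{N+1} ≥ 0. Write X(λ) = (x_1 < ⋯ < x_p) ⊂ {0,…,N+p−1} and X(μ) = (x'_1 < ⋯ < x'_p) ⊂ {0,…,N+p}. Then λ and μ interlace, i.e. μ_1 ≥ λ_1 ≥ μ_2 ≥ λ_2 ≥ ⋯ ≥ λ_N ≥ μ_{N+1}, if and only if for every i = 1,…,p one has x'_i = x_i or x'_i = x_i + 1. -/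

import Mathlib

open Finset

/-- A downward-closed finset in `Fin n` is an initial segment. -/
lemma down_mem {n : ℕ} (F : Finset (Fin n))
    (hF : ∀ ⦃j k : Fin n⦄, k ≤ j → j ∈ F → k ∈ F) (j : Fin n) :
    j ∈ F ↔ (j : ℕ) < F.card := by
  constructor
  · intro hj
    have hs : Finset.Iic j ⊆ F := fun k hk => hF (Finset.mem_Iic.mp hk) hj
    have := Finset.card_le_card hs
    rw [Fin.card_Iic] at this; omega
  · intro hj
    by_contra hjF
    have hs : F ⊆ Finset.Iio j := by
      intro k hk
      refine Finset.mem_Iio.mpr ?_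
      by_contra h
      exact hjF (hF (not_lt.mp h) hk)
    have := Finset.card_le_card hs
    rw [Fin.card_Iio] at this; omega

/-- Pointwise comparison of monotone sequences via counting. -/
lemma ptwise_iff_count {p : ℕ} (u v : Fin p → ℤ) (hu : Monotone u) (hv : Monotone v) :
    (∀ j, u j ≤ v j)
      ↔ ∀ t : ℤ, (univ.filter fun j => v j < t).card ≤ (univ.filter fun j => u j < t).card := by
  constructor
  · intro h t
    apply Finset.card_le_card
    intro j hj
    simp only [Finset.mem_filter, Finset.mem_univ, true_and] at hj ⊢
    exact lt_of_le_of_lt (h j) hj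
  · intro h j
    have hIic : Finset.Iic j ⊆ univ.filter fun k => v k < v j + 1 := by
      intro k hk
      refine Finset.mem_filter.mpr ⟨Finset.mem_univ _, ?_⟩
      have := hv (Finset.mem_Iic.mp hk); omega
    have h1 : (j : ℕ) + 1 ≤ (univ.filter fun k => v k < v j + 1).card := by
      have := Finset.card_le_card hIic
      rw [Fin.card_Iic] at this; omega
    have h2 := h (v j + 1)
    have hdown : ∀ ⦃j' k : Fin p⦄, k ≤ j' → j' ∈ (univ.filter fun k => u k < v j + 1)
        → k ∈ (univ.filter fun k => u k < v j + 1) := by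
      intro j' k hkj hj'
      simp only [Finset.mem_filter, Finset.mem_univ, true_and] at hj' ⊢
      exact lt_of_le_of_lt (hu hkj) hj'
    have := (down_mem _ hdown j).mpr (by omega)
    simp only [Finset.mem_filter, Finset.mem_univ, true_and] at this
    omega

/-- Membership threshold for antitone sequences. -/
lemma anti_count {m : ℕ} (c : Fin m → ℤ) (hc : ∀ i j : Fin m, i ≤ j → c j ≤ c i)
    (s : ℤ) (i : Fin m) :
    s ≤ c i ↔ (i : ℕ) < (univ.filter fun k => s ≤ c k).card := by
  have hdown : ∀ ⦃j k : Fin m⦄, k ≤ j → j ∈ (univ.filter fun k => s ≤ c k)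
      → k ∈ (univ.filter fun k => s ≤ c k) := by
    intro j k hkj hj
    simp only [Finset.mem_filter, Finset.mem_univ, true_and] at hj ⊢
    exact le_trans hj (hc k j hkj)
  rw [← down_mem _ hdown i]
  simp

/-- The counting formula: the number of points of `X` below `t`. -/
lemma count_formula {pp n : ℕ} (m : ℤ) (x : Fin pp → ℤ) (hx : StrictMono x)
    (a : Fin n → ℤ) (ha : Function.Injective a) (harange : ∀ i, a i ∈ Finset.Icc 0 m)
    (hX : Finset.image x Finset.univ = Finset.Icc 0 m \ Finset.image a Finset.univ) (t : ℤ) :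
    (univ.filter fun j => x j < t).card + n
      = (min (m + 1) t).toNat + (univ.filter fun i => t ≤ a i).card := by
  have h1 : (univ.filter fun j => x j < t).card
      = ((Finset.image x Finset.univ).filter (· < t)).card := by
    rw [Finset.filter_image, Finset.card_image_of_injective _ hx.injective]
  have hsub : Finset.image a Finset.univ ⊆ Finset.Icc 0 m := by
    intro y hy
    simp only [Finset.mem_image, Finset.mem_univ, true_and] at hy
    obtain ⟨i, rfl⟩ := hy
    exact harange i
  have h2 : (Finset.Icc 0 m \ Finset.image a Finset.univ).filter (· < t)
      = (Finset.Icc 0 m).filter (· < t) \ (Finset.image a Finset.univ).filter (· < t) := by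
    ext y
    simp only [Finset.mem_filter, Finset.mem_sdiff]
    tauto
  have hsub2 : (Finset.image a Finset.univ).filter (· < t)
      ⊆ (Finset.Icc 0 m).filter (· < t) := Finset.filter_subset_filter _ hsub
  have h3 : ((Finset.Icc 0 m \ Finset.image a Finset.univ).filter (· < t)).card
      + ((Finset.image a Finset.univ).filter (· < t)).card
      = ((Finset.Icc 0 m).filter (· < t)).card := by
    rw [h2, Finset.card_sdiff_of_subset hsub2]
    exact Nat.sub_add_cancel (Finset.card_le_card hsub2)
  have h4 : ((Finset.image a Finset.univ).filter (· < t)).card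
      = (univ.filter fun i => a i < t).card := by
    rw [Finset.filter_image, Finset.card_image_of_injective _ ha]
  have h5 : (univ.filter fun i => a i < t).card + (univ.filter fun i => t ≤ a i).card = n := by
    have := Finset.card_filter_add_card_filter_not (s := (univ : Finset (Fin n)))
      (p := fun i => a i < t)
    simp only [Finset.card_univ, Fintype.card_fin, not_lt] at this
    exact this
  have h6 : (Finset.Icc 0 m).filter (· < t) = Finset.Icc 0 (min m (t - 1)) := by
    ext y
    simp only [Finset.mem_filter, Finset.mem_Icc, le_min_iff, min_le_iff]
    constructor
    · rintro ⟨⟨h', h''⟩, h'''⟩; omega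
    · rintro ⟨h', h''⟩; omega
  have h7 : ((Finset.Icc 0 m).filter (· < t)).card = (min (m + 1) t).toNat := by
    rw [h6, Int.card_Icc]
    rcases le_total m (t - 1) with h | h
    · rw [min_eq_left h, min_eq_left (by omega)]; omega
    · rw [min_eq_right h, min_eq_right (by omega)]; omega
  rw [hX] at h1
  omega

/-- If `b i.succ ≤ a i` for all `i`, counts of `b` exceed counts of `a` by at most 1. -/
lemma interlace_count_le {n : ℕ} (a : Fin n → ℤ) (b : Fin (n + 1) → ℤ)
    (h : ∀ i : Fin n, b i.succ ≤ a i) (s : ℤ) :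
    (univ.filter fun i => s ≤ b i).card ≤ (univ.filter fun i => s ≤ a i).card + 1 := by
  rw [Finset.card_filter, Finset.card_filter, Fin.sum_univ_succ]
  have hsum : ∑ j : Fin n, (if s ≤ b j.succ then (1:ℕ) else 0)
      ≤ ∑ j : Fin n, (if s ≤ a j then (1:ℕ) else 0) := by
    apply Finset.sum_le_sum
    intro j _
    by_cases hh : s ≤ b j.succ
    · simp [hh, le_trans hh (h j)]
    · simp only [if_neg hh]
      split <;> norm_num
  have hb0 : (if s ≤ b 0 then (1:ℕ) else 0) ≤ 1 := by split <;> norm_num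
  omega

/-- If `a i < b i.castSucc` for all `i`, counts of `a` at `s` are at most counts of `b` at `s+1`. -/
lemma interlace_count_le' {n : ℕ} (a : Fin n → ℤ) (b : Fin (n + 1) → ℤ)
    (h : ∀ i : Fin n, a i < b i.castSucc) (s : ℤ) :
    (univ.filter fun i => s ≤ a i).card ≤ (univ.filter fun i => s + 1 ≤ b i).card := by
  rw [Finset.card_filter, Finset.card_filter, Fin.sum_univ_castSucc]
  have hsum : ∑ j : Fin n, (if s ≤ a j then (1:ℕ) else 0)
      ≤ ∑ j : Fin n, (if s + 1 ≤ b j.castSucc then (1:ℕ) else 0) := by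
    apply Finset.sum_le_sum
    intro j _
    by_cases hh : s ≤ a j
    · have : s + 1 ≤ b j.castSucc := by have := h j; omega
      simp [hh, this]
    · simp only [if_neg hh]
      split <;> norm_num
  omega

/-- signatures `λ ∈ 𝔾𝕋_N` and `μ ∈ 𝔾𝕋_{N+1}` (with entries
between `0` and `p`) interlace, i.e. `μ_1 ≥ λ_1 ≥ μ_2 ≥ ⋯ ≥ λ_N ≥ μ_{N+1}`,
iff the associated point configurations `X(λ) = (x_1 < ⋯ < x_p)` and
`X(μ) = (x'_1 < ⋯ < x'_p)` satisfy `x'_i = x_i` or `x'_i = x_i + 1` for all `i`.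
Here `lam i` stands for `λ_{i+1}`, `mu i` for `μ_{i+1}`, and
`X(λ) = {0,…,N+p−1} \ {λ_i − i + N}`, `X(μ) = {0,…,N+p} \ {μ_i − i + N + 1}`. -/
theorem interlacing_iff (N p : ℕ) (hN : 1 ≤ N) (hp : 1 ≤ p)
    (lam : Fin N → ℤ) (hlmono : ∀ i j : Fin N, i ≤ j → lam j ≤ lam i)
    (hltop : ∀ i, lam i ≤ p) (hlbot : ∀ i, 0 ≤ lam i)
    (mu : Fin (N + 1) → ℤ) (hmmono : ∀ i j : Fin (N + 1), i ≤ j → mu j ≤ mu i)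
    (hmtop : ∀ i, mu i ≤ p) (hmbot : ∀ i, 0 ≤ mu i)
    (x : Fin p → ℤ) (hx : StrictMono x)
    (x' : Fin p → ℤ) (hx' : StrictMono x')
    (hX : Finset.image x Finset.univ
      = Finset.Icc (0 : ℤ) ((N : ℤ) + p - 1)
        \ Finset.image (fun i : Fin N => lam i + N - 1 - (i : ℕ)) Finset.univ)
    (hX' : Finset.image x' Finset.univ
      = Finset.Icc (0 : ℤ) ((N : ℤ) + p)
        \ Finset.image (fun i : Fin (N + 1) => mu i + N - (i : ℕ)) Finset.univ) :
    (∀ i : Fin N, lam i ≤ mu i.castSucc ∧ mu i.succ ≤ lam i)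
      ↔ ∀ i : Fin p, x' i = x i ∨ x' i = x i + 1 := by
  set a : Fin N → ℤ := fun i => lam i + N - 1 - (i : ℕ) with ha_def
  set b : Fin (N + 1) → ℤ := fun i => mu i + N - (i : ℕ) with hb_def
  have haanti : ∀ i j : Fin N, i ≤ j → a j ≤ a i := by
    intro i j hij
    have h1 := hlmono i j hij
    have h2 : (i : ℕ) ≤ (j : ℕ) := hij
    simp only [ha_def]; omega
  have hbanti : ∀ i j : Fin (N + 1), i ≤ j → b j ≤ b i := by
    intro i j hij
    have h1 := hmmono i j hij
    have h2 : (i : ℕ) ≤ (j : ℕ) := hij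
    simp only [hb_def]; omega
  have hainj : Function.Injective a := by
    intro i j hij
    by_contra hne
    rcases lt_or_gt_of_ne hne with h | h
    · have h1 := hlmono i j h.le
      have h2 : (i : ℕ) < (j : ℕ) := h
      simp only [ha_def] at hij; omega
    · have h1 := hlmono j i h.le
      have h2 : (j : ℕ) < (i : ℕ) := h
      simp only [ha_def] at hij; omega
  have hbinj : Function.Injective b := by
    intro i j hij
    by_contra hne
    rcases lt_or_gt_of_ne hne with h | h
    · have h1 := hmmono i j h.le
      have h2 : (i : ℕ) < (j : ℕ) := h
      simp only [hb_def] at hij; omega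
    · have h1 := hmmono j i h.le
      have h2 : (j : ℕ) < (i : ℕ) := h
      simp only [hb_def] at hij; omega
  have harange : ∀ i, a i ∈ Finset.Icc (0 : ℤ) ((N : ℤ) + p - 1) := by
    intro i
    have h1 := hlbot i; have h2 := hltop i; have h3 : (i : ℕ) < N := i.isLt
    simp only [ha_def, Finset.mem_Icc]
    omega
  have hbrange : ∀ i, b i ∈ Finset.Icc (0 : ℤ) ((N : ℤ) + p) := by
    intro i
    have h1 := hmbot i; have h2 := hmtop i; have h3 : (i : ℕ) < N + 1 := i.isLt
    simp only [hb_def, Finset.mem_Icc]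
    omega
  have keyx : ∀ t : ℤ, (univ.filter fun j => x j < t).card + N
      = (min ((N : ℤ) + p - 1 + 1) t).toNat + (univ.filter fun i => t ≤ a i).card :=
    fun t => count_formula ((N : ℤ) + p - 1) x hx a hainj harange hX t
  have keyx' : ∀ t : ℤ, (univ.filter fun j => x' j < t).card + (N + 1)
      = (min ((N : ℤ) + p + 1) t).toNat + (univ.filter fun i => t ≤ b i).card :=
    fun t => count_formula ((N : ℤ) + p) x' hx' b hbinj hbrange hX' t
  have hfiltereq : ∀ t : ℤ, (univ.filter fun j => x j + 1 < t)
      = (univ.filter fun j => x j < t - 1) := by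
    intro t
    apply Finset.filter_congr
    intro j _
    constructor <;> intro <;> omega
  constructor
  · -- interlacing → points differ by 0 or 1
    intro hint
    have hab1 : ∀ i : Fin N, a i < b i.castSucc := by
      intro i
      have h1 := (hint i).1
      have h2 : ((i.castSucc : Fin (N + 1)) : ℕ) = (i : ℕ) := rfl
      simp only [ha_def, hb_def, h2]
      omega
    have hab2 : ∀ i : Fin N, b i.succ ≤ a i := by
      intro i
      have h1 := (hint i).2
      have h2 : ((i.succ : Fin (N + 1)) : ℕ) = (i : ℕ) + 1 := rfl
      simp only [ha_def, hb_def, h2]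
      push_cast
      omega
    have hM1 := interlace_count_le a b hab2
    have hM2 := interlace_count_le' a b hab1
    have c1 : ∀ t : ℤ, (univ.filter fun j => x' j < t).card
        ≤ (univ.filter fun j => x j < t).card := by
      intro t
      have k1 := keyx t; have k2 := keyx' t
      rcases le_or_gt t ((N : ℤ) + p) with hle | hgt
      · rw [min_eq_right (by omega)] at k1
        rw [min_eq_right (by omega)] at k2
        have := hM1 t
        omega
      · have hM0 : (univ.filter fun i => t ≤ b i).card = 0 := by
          rw [Finset.card_eq_zero, Finset.filter_eq_empty_iff]
          intro i _
          have := hbrange i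
          rw [Finset.mem_Icc] at this
          omega
        rw [min_eq_left (by omega)] at k1
        rcases le_total ((N : ℤ) + p + 1) t with h' | h'
        · rw [min_eq_left h'] at k2; omega
        · rw [min_eq_right h'] at k2; omega
    have c2 : ∀ t : ℤ, (univ.filter fun j => x j < t - 1).card
        ≤ (univ.filter fun j => x' j < t).card := by
      intro t
      have k1 := keyx (t - 1); have k2 := keyx' t
      have hm2 := hM2 (t - 1)
      rw [show t - 1 + 1 = t by ring] at hm2
      rcases le_or_gt t 0 with hle | hgt
      · have hMfull : (univ.filter fun i => t ≤ b i).card = N + 1 := by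
          rw [Finset.filter_true_of_mem, Finset.card_univ, Fintype.card_fin]
          intro i _
          have := hbrange i
          rw [Finset.mem_Icc] at this
          omega
        have hLle : (univ.filter fun i => t - 1 ≤ a i).card ≤ N := by
          refine le_trans (Finset.card_le_card (Finset.filter_subset _ _)) ?_
          simp
        rw [min_eq_right (by omega)] at k1
        rw [min_eq_right (by omega)] at k2
        omega
      · rcases le_total t ((N : ℤ) + p + 1) with h' | h'
        · rw [min_eq_right (by omega)] at k1
          rw [min_eq_right (by omega)] at k2
          omega
        · rw [min_eq_left (by omega)] at k1
          rw [min_eq_left (by omega)] at k2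
          omega
    intro i
    have hle1 : x i ≤ x' i :=
      (ptwise_iff_count x x' hx.monotone hx'.monotone).mpr c1 i
    have hle2 : x' i ≤ x i + 1 := by
      refine (ptwise_iff_count x' (fun j => x j + 1) hx'.monotone
        (fun i j hij => add_le_add_left (hx.monotone hij) 1)).mpr ?_ i
      intro t
      rw [hfiltereq t]
      exact c2 t
    omega
  · -- points differ by 0 or 1 → interlacing
    intro hxx i
    have hle : ∀ j, x j ≤ x' j ∧ x' j ≤ x j + 1 := by
      intro j; rcases hxx j with h | h <;> omega
    have c1 := (ptwise_iff_count x x' hx.monotone hx'.monotone).mp (fun j => (hle j).1)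
    have c2' := (ptwise_iff_count x' (fun j => x j + 1) hx'.monotone
      (fun i j hij => add_le_add_left (hx.monotone hij) 1)).mp (fun j => (hle j).2)
    have c2 : ∀ t : ℤ, (univ.filter fun j => x j < t - 1).card
        ≤ (univ.filter fun j => x' j < t).card := by
      intro t
      have := c2' t
      rwa [hfiltereq t] at this
    constructor
    · -- lam i ≤ mu i.castSucc
      have hs := harange i
      rw [Finset.mem_Icc] at hs
      have hLM : (univ.filter fun k => a i ≤ a k).card
          ≤ (univ.filter fun k => a i + 1 ≤ b k).card := by
        have k1 := keyx (a i); have k2 := keyx' (a i + 1)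
        have hc2 := c2 (a i + 1)
        rw [show a i + 1 - 1 = a i by ring] at hc2
        rw [min_eq_right (by omega)] at k1
        rw [min_eq_right (by omega)] at k2
        omega
      have h1 : (i : ℕ) < (univ.filter fun k => a i ≤ a k).card :=
        (anti_count a haanti (a i) i).mp le_rfl
      have h2 : a i + 1 ≤ b i.castSucc := by
        refine (anti_count b hbanti (a i + 1) i.castSucc).mpr ?_
        have h3 : ((i.castSucc : Fin (N + 1)) : ℕ) = (i : ℕ) := rfl
        omega
      have h4 : ((i.castSucc : Fin (N + 1)) : ℕ) = (i : ℕ) := rfl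
      simp only [ha_def, hb_def, h4] at h2
      omega
    · -- mu i.succ ≤ lam i
      have hs := hbrange i.succ
      rw [Finset.mem_Icc] at hs
      have hML : (univ.filter fun k => b i.succ ≤ b k).card
          ≤ (univ.filter fun k => b i.succ ≤ a k).card + 1 := by
        have k1 := keyx (b i.succ); have k2 := keyx' (b i.succ)
        have hc1 := c1 (b i.succ)
        rw [min_eq_right (by omega)] at k1
        rw [min_eq_right (by omega)] at k2
        omega
      have h1 : ((i.succ : Fin (N + 1)) : ℕ) < (univ.filter fun k => b i.succ ≤ b k).card :=
        (anti_count b hbanti (b i.succ) i.succ).mp le_rfl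
      have h3 : ((i.succ : Fin (N + 1)) : ℕ) = (i : ℕ) + 1 := rfl
      have h2 : b i.succ ≤ a i := by
        refine (anti_count a haanti (b i.succ) i).mpr ?_
        omega
      simp only [ha_def, hb_def, h3] at h2
      push_cast at h2
      omega
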